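/- Let f₂₀ < 0 and let Z₋ ≤ Z₊, Y₋ ≤ Y₊, R₁ ≤ R₀ be reals such that the polynomial identity (x−Z₊)(x−Z₋) − (1−f₂₀)(x−Y₊)(x−Y₋) = f₂₀(x−R₀)(x−R₁) holds for all x ∈ ℝ. If moreover Y₋ ≤ Z₋ ≤ Y₊ and Y₋ ≤ R₀ ≤ Y₊, then the full ordering R₁ ≤ Y₋ ≤ Z₋ ≤ R₀ ≤ Y₊ ≤ Z₊ holds. Similarly, if f₂₀ = 0 and instead the identity (x−Z₊)(x−Z₋) − (x−Y₊)(x−Y₋) = f₁₀(x−R₀) holds for all x with some f₁₀ < 0, and Y₋ ≤ Z₋ ≤ Y₊, Y₋ ≤ R₀ ≤ Y₊, then Y₋ ≤ Z₋ ≤ R₀ ≤ Y₊ ≤ Z₊. -/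
import Mathlib


/-- ordering of the zeros `Y_±, Z_±, R_ν` (Scenarios 2 and 1b of
Lemma on the relation `p_Z - p_Y = p_R`). -/
theorem stmt_14 :
    (∀ f₂₀ Zp Zm Yp Ym R₀ R₁ : ℝ, f₂₀ < 0 → Zm ≤ Zp → Ym ≤ Yp → R₁ ≤ R₀ →
      (∀ x : ℝ,
        (x - Zp) * (x - Zm) - (1 - f₂₀) * ((x - Yp) * (x - Ym)) =
          f₂₀ * ((x - R₀) * (x - R₁))) →
      Ym ≤ Zm → Zm ≤ Yp → Ym ≤ R₀ → R₀ ≤ Yp →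
      (R₁ ≤ Ym ∧ Ym ≤ Zm ∧ Zm ≤ R₀ ∧ R₀ ≤ Yp ∧ Yp ≤ Zp)) ∧
    (∀ f₁₀ Zp Zm Yp Ym R₀ : ℝ, f₁₀ < 0 → Zm ≤ Zp → Ym ≤ Yp →
      (∀ x : ℝ,
        (x - Zp) * (x - Zm) - (x - Yp) * (x - Ym) = f₁₀ * (x - R₀)) →
      Ym ≤ Zm → Zm ≤ Yp → Ym ≤ R₀ → R₀ ≤ Yp →
      (Ym ≤ Zm ∧ Zm ≤ R₀ ∧ R₀ ≤ Yp ∧ Yp ≤ Zp)) := by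
  constructor
  · intro f₂₀ Zp Zm Yp Ym R₀ R₁ hf hZ hY hR h h1 h2 h3 h4
    have hYm := h Ym
    have hYp := h Yp
    have hZm := h Zm
    -- evaluation at Ym : (Ym-R₀)(Ym-R₁) ≤ 0
    have P1 : (Ym - R₀) * (Ym - R₁) ≤ 0 := by
      nlinarith [mul_nonneg (sub_nonneg.2 (h1.trans hZ)) (sub_nonneg.2 h1)]
    have hR1 : R₁ ≤ Ym := by nlinarith [P1, hR, h3]
    -- evaluation at Yp : (Yp-Zp)(Yp-Zm) ≤ 0
    have P2 : (Yp - Zp) * (Yp - Zm) ≤ 0 := by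
      nlinarith [mul_nonneg (sub_nonneg.2 h4) (sub_nonneg.2 (hR1.trans hY))]
    have hZp : Yp ≤ Zp := by nlinarith [P2, h2, hZ]
    -- evaluation at Zm : (Zm-R₀)(Zm-R₁) ≤ 0
    have P3 : (Zm - R₀) * (Zm - R₁) ≤ 0 := by
      nlinarith [mul_nonpos_of_nonpos_of_nonneg (sub_nonpos.2 h2) (sub_nonneg.2 h1)]
    have hZR : Zm ≤ R₀ := by nlinarith [P3, hR1, h1, h3]
    exact ⟨hR1, h1, hZR, h4, hZp⟩
  · intro f₁₀ Zp Zm Yp Ym R₀ hf hZ hY h h1 h2 h3 h4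
    have hYp := h Yp
    have hZm := h Zm
    have P2 : (Yp - Zp) * (Yp - Zm) ≤ 0 := by
      nlinarith [mul_nonneg (sub_nonneg.2 h4) (le_refl (0:ℝ))]
    have hZp : Yp ≤ Zp := by nlinarith [P2, h2, hZ]
    have P3 : Zm - R₀ ≤ 0 := by
      nlinarith [mul_nonpos_of_nonpos_of_nonneg (sub_nonpos.2 h2) (sub_nonneg.2 h1)]
    exact ⟨h1, by linarith, h4, hZp⟩
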